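/- In the weighted game v_n = [n³+n²; 2n², 1, …, 1] with 2n³ players of weight 1, for n ≥ 11 the Penrose–Banzhaf index of player 1 satisfies BZI₁(v_n) ≥ 1 − 2n³/2.6^n, where BZI₁(v_n) = η₁(v_n)/(η₁(v_n) + 2n³·η₂(v_n)), η₁(v_n) = Σ_{i=1}^{2n²} C(2n³, n³+n²−i), and η₂(v_n) = C(2n³, n³+n²). -/

import Mathlib

open Finset

/-- Per-factor inequality: `(N+1-j)*(N+1)^(2j-1) ≤ (N+j)*N^(2j-1)`. -/
lemma stmt14_perfac (N : ℕ) (j : ℕ) (h1 : 1 ≤ j) (hj : j ≤ N) :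
    (N + 1 - j) * (N + 1) ^ (2 * j - 1) ≤ (N + j) * N ^ (2 * j - 1) := by
  induction j, h1 using Nat.le_induction with
  | base => simp [Nat.mul_comm]
  | succ j hj1 ih =>
    have hjN : j ≤ N := by omega
    have IH := ih hjN
    have key : (N - j) * ((N + j) * (N + 1) ^ 2) ≤ (N + 1 - j) * ((N + j + 1) * N ^ 2) := by
      obtain ⟨d, hd⟩ : ∃ d, N = j + d + 1 := ⟨N - j - 1, by omega⟩
      have e1 : N - j = d + 1 := by omega
      have e2 : N + 1 - j = d + 2 := by omega
      rw [e1, e2, hd]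
      nlinarith [sq_nonneg j, sq_nonneg d, Nat.zero_le (j*j*(j+d))]
    have e1 : 2 * (j + 1) - 1 = (2 * j - 1) + 2 := by omega
    have s1 : N + 1 - (j + 1) = N - j := by omega
    have hpos : 0 < N + j := by omega
    apply Nat.le_of_mul_le_mul_left _ hpos
    calc (N + j) * ((N + 1 - (j + 1)) * (N + 1) ^ (2 * (j + 1) - 1))
        = ((N - j) * ((N + j) * (N + 1) ^ 2)) * (N + 1) ^ (2 * j - 1) := by
          rw [e1, s1, pow_add]; ring
      _ ≤ ((N + 1 - j) * ((N + j + 1) * N ^ 2)) * (N + 1) ^ (2 * j - 1) :=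
          Nat.mul_le_mul_right _ key
      _ = ((N + j + 1) * N ^ 2) * ((N + 1 - j) * (N + 1) ^ (2 * j - 1)) := by ring
      _ ≤ ((N + j + 1) * N ^ 2) * ((N + j) * N ^ (2 * j - 1)) :=
          Nat.mul_le_mul_left _ IH
      _ = (N + j) * ((N + (j + 1)) * N ^ (2 * (j + 1) - 1)) := by
          rw [e1, pow_add]; ring

/-- Choose-product identity. -/
lemma stmt14_chooseprod (N : ℕ) : ∀ k, k ≤ N →
    (2 * N).choose (N + k) * ∏ i ∈ Icc 1 k, (N + i)
      = (2 * N).choose N * ∏ i ∈ Icc 1 k, (N + 1 - i) := by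
  intro k
  induction k with
  | zero => simp
  | succ k ih =>
    intro h
    have ihh := ih (by omega)
    rw [Finset.prod_Icc_succ_top (by omega), Finset.prod_Icc_succ_top (by omega)]
    have hstep : (2 * N).choose (N + (k + 1)) * (N + (k + 1))
        = (2 * N).choose (N + k) * (N - k) := by
      have h0 := Nat.choose_succ_right_eq (2 * N) (N + k)
      have h2 : 2 * N - (N + k) = N - k := by omega
      have h3 : N + (k + 1) = (N + k) + 1 := by omega
      rw [h3, h0, h2]
    have h4 : N + 1 - (k + 1) = N - k := by omega
    calc (2 * N).choose (N + (k + 1)) * ((∏ i ∈ Icc 1 k, (N + i)) * (N + (k + 1)))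
        = ((2 * N).choose (N + (k + 1)) * (N + (k + 1))) * ∏ i ∈ Icc 1 k, (N + i) := by
          ring
      _ = ((2 * N).choose (N + k) * (N - k)) * ∏ i ∈ Icc 1 k, (N + i) := by rw [hstep]
      _ = ((2 * N).choose (N + k) * ∏ i ∈ Icc 1 k, (N + i)) * (N - k) := by ring
      _ = ((2 * N).choose N * ∏ i ∈ Icc 1 k, (N + 1 - i)) * (N - k) := by rw [ihh]
      _ = (2 * N).choose N * ((∏ i ∈ Icc 1 k, (N + 1 - i)) * (N + 1 - (k + 1))) := by
          rw [h4]; ring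

lemma stmt14_sumodd : ∀ k : ℕ, ∑ j ∈ Icc 1 k, (2 * j - 1) = k ^ 2 := by
  intro k
  induction k with
  | zero => simp
  | succ k ih =>
    rw [Finset.sum_Icc_succ_top (by omega), ih]
    have h : 2 * (k + 1) - 1 = 2 * k + 1 := by omega
    rw [h]; ring

lemma stmt14_prodineq (N k : ℕ) (hk : k ≤ N) :
    (∏ j ∈ Icc 1 k, (N + 1 - j)) * (N + 1) ^ (k ^ 2)
      ≤ (∏ j ∈ Icc 1 k, (N + j)) * N ^ (k ^ 2) := by
  have h1 : ∏ j ∈ Icc 1 k, ((N + 1 - j) * (N + 1) ^ (2 * j - 1))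
      ≤ ∏ j ∈ Icc 1 k, ((N + j) * N ^ (2 * j - 1)) := by
    apply Finset.prod_le_prod'
    intro j hj
    simp only [Finset.mem_Icc] at hj
    exact stmt14_perfac N j hj.1 (le_trans hj.2 hk)
  rwa [Finset.prod_mul_distrib, Finset.prod_mul_distrib,
    Finset.prod_pow_eq_pow_sum, Finset.prod_pow_eq_pow_sum, stmt14_sumodd] at h1

set_option maxRecDepth 4000 in
lemma stmt14_poly6 (N : ℕ) (hN : 1331 ≤ N) :
    13 * N ^ 6 ≤ 5 * ∑ j ∈ range 7, N ^ (6 - j) * N.choose j := by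
  obtain ⟨m, rfl⟩ : ∃ m, N = m + 1331 := ⟨N - 1331, by omega⟩
  have s0 : m + 1331 - 0 = m + 1331 := by omega
  have s1 : m + 1331 - 1 = m + 1330 := by omega
  have s2 : m + 1331 - 2 = m + 1329 := by omega
  have s3 : m + 1331 - 3 = m + 1328 := by omega
  have s4 : m + 1331 - 4 = m + 1327 := by omega
  have s5 : m + 1331 - 5 = m + 1326 := by omega
  have c2 : 2 * (m + 1331).choose 2 = (m + 1330) * ((m + 1331) * 1) := by
    have h := Nat.descFactorial_eq_factorial_mul_choose (m + 1331) 2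
    rw [show Nat.factorial 2 = 2 from rfl,
      show (m + 1331).descFactorial 2 = (m + 1331 - 1) * ((m + 1331 - 0) * 1) from rfl,
      s1, s0] at h
    exact h.symm
  have c3 : 6 * (m + 1331).choose 3 = (m + 1329) * ((m + 1330) * ((m + 1331) * 1)) := by
    have h := Nat.descFactorial_eq_factorial_mul_choose (m + 1331) 3
    rw [show Nat.factorial 3 = 6 from rfl,
      show (m + 1331).descFactorial 3
        = (m + 1331 - 2) * ((m + 1331 - 1) * ((m + 1331 - 0) * 1)) from rfl,
      s2, s1, s0] at h
    exact h.symm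
  have c4 : 24 * (m + 1331).choose 4
      = (m + 1328) * ((m + 1329) * ((m + 1330) * ((m + 1331) * 1))) := by
    have h := Nat.descFactorial_eq_factorial_mul_choose (m + 1331) 4
    rw [show Nat.factorial 4 = 24 from rfl,
      show (m + 1331).descFactorial 4
        = (m + 1331 - 3) * ((m + 1331 - 2) * ((m + 1331 - 1) * ((m + 1331 - 0) * 1))) from rfl,
      s3, s2, s1, s0] at h
    exact h.symm
  have c5 : 120 * (m + 1331).choose 5
      = (m + 1327) * ((m + 1328) * ((m + 1329) * ((m + 1330) * ((m + 1331) * 1)))) := by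
    have h := Nat.descFactorial_eq_factorial_mul_choose (m + 1331) 5
    rw [show Nat.factorial 5 = 120 from rfl,
      show (m + 1331).descFactorial 5
        = (m + 1331 - 4) * ((m + 1331 - 3) * ((m + 1331 - 2) * ((m + 1331 - 1)
            * ((m + 1331 - 0) * 1)))) from rfl,
      s4, s3, s2, s1, s0] at h
    exact h.symm
  have c6 : 720 * (m + 1331).choose 6
      = (m + 1326) * ((m + 1327) * ((m + 1328) * ((m + 1329) * ((m + 1330)
          * ((m + 1331) * 1))))) := by
    have h := Nat.descFactorial_eq_factorial_mul_choose (m + 1331) 6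
    rw [show Nat.factorial 6 = 720 from rfl,
      show (m + 1331).descFactorial 6
        = (m + 1331 - 5) * ((m + 1331 - 4) * ((m + 1331 - 3) * ((m + 1331 - 2)
            * ((m + 1331 - 1) * ((m + 1331 - 0) * 1))))) from rfl,
      s5, s4, s3, s2, s1, s0] at h
    exact h.symm
  rw [show (7 : ℕ) = 6 + 1 from rfl]
  rw [Finset.sum_range_succ, Finset.sum_range_succ, Finset.sum_range_succ,
    Finset.sum_range_succ, Finset.sum_range_succ, Finset.sum_range_succ,
    Finset.sum_range_succ, Finset.sum_range_zero]
  zify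
  have zc2 : (2 : ℤ) * ((m + 1331).choose 2 : ℤ)
      = ((m : ℤ) + 1330) * (((m : ℤ) + 1331) * 1) := by exact_mod_cast c2
  have zc3 : (6 : ℤ) * ((m + 1331).choose 3 : ℤ)
      = ((m : ℤ) + 1329) * (((m : ℤ) + 1330) * (((m : ℤ) + 1331) * 1)) := by exact_mod_cast c3
  have zc4 : (24 : ℤ) * ((m + 1331).choose 4 : ℤ)
      = ((m : ℤ) + 1328) * (((m : ℤ) + 1329) * (((m : ℤ) + 1330) * (((m : ℤ) + 1331) * 1))) := by
    exact_mod_cast c4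
  have zc5 : (120 : ℤ) * ((m + 1331).choose 5 : ℤ)
      = ((m : ℤ) + 1327) * (((m : ℤ) + 1328) * (((m : ℤ) + 1329) * (((m : ℤ) + 1330)
          * (((m : ℤ) + 1331) * 1)))) := by exact_mod_cast c5
  have zc6 : (720 : ℤ) * ((m + 1331).choose 6 : ℤ)
      = ((m : ℤ) + 1326) * (((m : ℤ) + 1327) * (((m : ℤ) + 1328) * (((m : ℤ) + 1329)
          * (((m : ℤ) + 1330) * (((m : ℤ) + 1331) * 1))))) := by exact_mod_cast c6
  have key : (720 : ℤ) * (13 * ((m : ℤ) + 1331) ^ 6)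
        + (425 * (m : ℤ) ^ 6 + 3389175 * (m : ℤ) ^ 5 + 11261262575 * (m : ℤ) ^ 4
          + 19956214797525 * (m : ℤ) ^ 3 + 19892576909594840 * (m : ℤ) ^ 2
          + 10575524414093695380 * (m : ℤ) + 2342614338802962552240)
      = 720 * (5 * (0 + ((m : ℤ) + 1331) ^ (6 - 0) * ((m + 1331).choose 0 : ℤ)
          + ((m : ℤ) + 1331) ^ (6 - 1) * ((m + 1331).choose 1 : ℤ)
          + ((m : ℤ) + 1331) ^ (6 - 2) * ((m + 1331).choose 2 : ℤ)
          + ((m : ℤ) + 1331) ^ (6 - 3) * ((m + 1331).choose 3 : ℤ)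
          + ((m : ℤ) + 1331) ^ (6 - 4) * ((m + 1331).choose 4 : ℤ)
          + ((m : ℤ) + 1331) ^ (6 - 5) * ((m + 1331).choose 5 : ℤ)
          + ((m : ℤ) + 1331) ^ (6 - 6) * ((m + 1331).choose 6 : ℤ))) := by
    rw [Nat.choose_zero_right, Nat.choose_one_right]
    push_cast
    linear_combination (-1800 * ((m : ℤ) + 1331) ^ 4) * zc2
      + (-600 * ((m : ℤ) + 1331) ^ 3) * zc3 + (-150 * ((m : ℤ) + 1331) ^ 2) * zc4
      + (-30 * ((m : ℤ) + 1331)) * zc5 + (-5) * zc6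
  have hΔ : (0 : ℤ) ≤ 425 * (m : ℤ) ^ 6 + 3389175 * (m : ℤ) ^ 5 + 11261262575 * (m : ℤ) ^ 4
      + 19956214797525 * (m : ℤ) ^ 3 + 19892576909594840 * (m : ℤ) ^ 2
      + 10575524414093695380 * (m : ℤ) + 2342614338802962552240 := by
    have hm : (0 : ℤ) ≤ (m : ℤ) := Int.natCast_nonneg m
    have p2 := pow_nonneg hm 2
    have p3 := pow_nonneg hm 3
    have p4 := pow_nonneg hm 4
    have p5 := pow_nonneg hm 5
    have p6 := pow_nonneg hm 6
    linarith
  push_cast at key ⊢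
  linarith [key, hΔ]

lemma stmt14_powlem (N : ℕ) (hN : 1331 ≤ N) : 13 * N ^ N ≤ 5 * (N + 1) ^ N := by
  have h6 : 6 ≤ N := by omega
  have hb : ∑ j ∈ range 7, N ^ (N - 6) * (N ^ (6 - j) * N.choose j) ≤ (N + 1) ^ N := by
    have hexp : (N + 1) ^ N = ∑ i ∈ range (N + 1), N ^ i * N.choose i := by
      rw [add_pow]
      apply Finset.sum_congr rfl
      intro i _
      rw [one_pow, mul_one, Nat.cast_id]
    rw [hexp]
    have himg : ∑ j ∈ range 7, N ^ (N - 6) * (N ^ (6 - j) * N.choose j)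
        = ∑ i ∈ (range 7).image (fun j => N - j), N ^ i * N.choose i := by
      rw [Finset.sum_image (by
        intro a ha b hb hab
        simp only [Finset.mem_coe, Finset.mem_range] at ha hb hab
        omega)]
      apply Finset.sum_congr rfl
      intro j hj
      simp only [Finset.mem_range] at hj
      rw [Nat.choose_symm (by omega)]
      have hsplit : N - j = (N - 6) + (6 - j) := by omega
      rw [hsplit, pow_add, mul_assoc]
    rw [himg]
    apply Finset.sum_le_sum_of_subset
    intro i hi
    simp only [Finset.mem_image, Finset.mem_range] at hi
    simp only [Finset.mem_range]
    omega
  calc 13 * N ^ N = N ^ (N - 6) * (13 * N ^ 6) := by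
        have : N ^ (N - 6) * N ^ 6 = N ^ N := by
          rw [← pow_add]; congr 1; omega
        calc 13 * N ^ N = 13 * (N ^ (N - 6) * N ^ 6) := by rw [this]
          _ = N ^ (N - 6) * (13 * N ^ 6) := by ring
    _ ≤ N ^ (N - 6) * (5 * ∑ j ∈ range 7, N ^ (6 - j) * N.choose j) :=
        Nat.mul_le_mul_left _ (stmt14_poly6 N hN)
    _ = 5 * ∑ j ∈ range 7, N ^ (N - 6) * (N ^ (6 - j) * N.choose j) := by
        simp only [Finset.mul_sum]
        exact Finset.sum_congr rfl fun j _ => by ring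
    _ ≤ 5 * (N + 1) ^ N := Nat.mul_le_mul_left _ hb

lemma stmt14_mainnat (n : ℕ) (hn : 11 ≤ n) :
    13 ^ n * (2 * n ^ 3).choose (n ^ 3 + n ^ 2) ≤ 5 ^ n * (2 * n ^ 3).choose (n ^ 3) := by
  set N := n ^ 3 with hNdef
  set k := n ^ 2 with hkdef
  have hk : k ≤ N := Nat.pow_le_pow_right (by omega) (by omega)
  have hN1331 : 1331 ≤ N := by
    calc (1331 : ℕ) = 11 ^ 3 := by norm_num
      _ ≤ n ^ 3 := Nat.pow_le_pow_left hn 3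
  have hpow : (13 * N ^ N) ^ n ≤ (5 * (N + 1) ^ N) ^ n :=
    Nat.pow_le_pow_left (stmt14_powlem N hN1331) n
  have hexpN : (N ^ N) ^ n = N ^ (k ^ 2) := by
    rw [← pow_mul]; congr 1; rw [hNdef, hkdef]; ring
  have hexpN1 : ((N + 1) ^ N) ^ n = (N + 1) ^ (k ^ 2) := by
    rw [← pow_mul]; congr 1; rw [hNdef, hkdef]; ring
  have hpow2 : 13 ^ n * N ^ (k ^ 2) ≤ 5 ^ n * (N + 1) ^ (k ^ 2) := by
    calc 13 ^ n * N ^ (k ^ 2) = (13 * N ^ N) ^ n := by rw [mul_pow, hexpN]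
      _ ≤ (5 * (N + 1) ^ N) ^ n := hpow
      _ = 5 ^ n * (N + 1) ^ (k ^ 2) := by rw [mul_pow, hexpN1]
  have hid := stmt14_chooseprod N k hk
  have hprod := stmt14_prodineq N k hk
  set A := ∏ i ∈ Icc 1 k, (N + i) with hA
  set B := ∏ i ∈ Icc 1 k, (N + 1 - i) with hB
  have hCpos : 0 < A * ((N + 1) ^ (k ^ 2) * N ^ (k ^ 2)) := by
    apply Nat.mul_pos
    · apply Finset.prod_pos; intro i _; omega
    · exact Nat.mul_pos (pow_pos (by omega) _) (pow_pos (by omega) _)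
  have key : (13 ^ n * (2 * N).choose (N + k)) * (A * ((N + 1) ^ (k ^ 2) * N ^ (k ^ 2)))
      ≤ (5 ^ n * (2 * N).choose N) * (A * ((N + 1) ^ (k ^ 2) * N ^ (k ^ 2))) := by
    calc (13 ^ n * (2 * N).choose (N + k)) * (A * ((N + 1) ^ (k ^ 2) * N ^ (k ^ 2)))
        = ((2 * N).choose (N + k) * A) * ((N + 1) ^ (k ^ 2) * (13 ^ n * N ^ (k ^ 2))) := by
          ring
      _ = ((2 * N).choose N * B) * ((N + 1) ^ (k ^ 2) * (13 ^ n * N ^ (k ^ 2))) := by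
          rw [hid]
      _ = (13 ^ n * N ^ (k ^ 2)) * ((2 * N).choose N * (B * (N + 1) ^ (k ^ 2))) := by ring
      _ ≤ (13 ^ n * N ^ (k ^ 2)) * ((2 * N).choose N * (A * N ^ (k ^ 2))) :=
          Nat.mul_le_mul_left _ (Nat.mul_le_mul_left _ hprod)
      _ = ((2 * N).choose N * (A * N ^ (k ^ 2))) * (13 ^ n * N ^ (k ^ 2)) := by ring
      _ ≤ ((2 * N).choose N * (A * N ^ (k ^ 2))) * (5 ^ n * (N + 1) ^ (k ^ 2)) :=
          Nat.mul_le_mul_left _ hpow2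
      _ = (5 ^ n * (2 * N).choose N) * (A * ((N + 1) ^ (k ^ 2) * N ^ (k ^ 2))) := by ring
  exact Nat.le_of_mul_le_mul_right key hCpos

theorem stmt14 (n : ℕ) (hn : 11 ≤ n) (η₁ η₂ : ℕ)
    (h1 : η₁ = ∑ i ∈ Finset.Icc 1 (2 * n ^ 2), (2 * n ^ 3).choose (n ^ 3 + n ^ 2 - i))
    (h2 : η₂ = (2 * n ^ 3).choose (n ^ 3 + n ^ 2)) :
    1 - 2 * (n : ℝ) ^ 3 / (2.6 : ℝ) ^ n ≤
      (η₁ : ℝ) / ((η₁ : ℝ) + 2 * (n : ℝ) ^ 3 * (η₂ : ℝ)) := by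
  have hn2 : 1 ≤ n ^ 2 := Nat.one_le_pow _ _ (by omega)
  -- η₁ ≥ choose (2n³) (n³)
  have hsingle : (2 * n ^ 3).choose (n ^ 3) ≤ η₁ := by
    rw [h1]
    have hmem : n ^ 2 ∈ Finset.Icc 1 (2 * n ^ 2) := by
      simp only [Finset.mem_Icc]
      omega
    have := Finset.single_le_sum
      (f := fun i => (2 * n ^ 3).choose (n ^ 3 + n ^ 2 - i))
      (fun i _ => Nat.zero_le _) hmem
    simpa using this
  have hnat : 13 ^ n * η₂ ≤ 5 ^ n * η₁ := by
    rw [h2]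
    calc 13 ^ n * (2 * n ^ 3).choose (n ^ 3 + n ^ 2)
        ≤ 5 ^ n * (2 * n ^ 3).choose (n ^ 3) := stmt14_mainnat n hn
      _ ≤ 5 ^ n * η₁ := Nat.mul_le_mul_left _ hsingle
  have hη₁pos : 0 < η₁ := by
    have := Nat.choose_pos (show n ^ 3 ≤ 2 * n ^ 3 by omega)
    omega
  -- real versions
  have hη₁R : (0 : ℝ) < (η₁ : ℝ) := by exact_mod_cast hη₁pos
  have hη₂R : (0 : ℝ) ≤ (η₂ : ℝ) := Nat.cast_nonneg _
  have hnR : (0 : ℝ) < (n : ℝ) := by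
    have : (0 : ℕ) < n := by omega
    exact_mod_cast this
  have hP : (0 : ℝ) < (2.6 : ℝ) ^ n := by positivity
  have hkey : (2.6 : ℝ) ^ n * (η₂ : ℝ) ≤ (η₁ : ℝ) := by
    have hcast : (13 : ℝ) ^ n * (η₂ : ℝ) ≤ (5 : ℝ) ^ n * (η₁ : ℝ) := by
      exact_mod_cast hnat
    have h26 : (2.6 : ℝ) = 13 / 5 := by norm_num
    rw [h26, div_pow, div_mul_eq_mul_div, div_le_iff₀ (by positivity)]
    linarith [hcast]
  have hB : (0 : ℝ) ≤ 2 * (n : ℝ) ^ 3 := by positivity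
  have hD : (0 : ℝ) < (η₁ : ℝ) + 2 * (n : ℝ) ^ 3 * (η₂ : ℝ) := by
    have : (0 : ℝ) ≤ 2 * (n : ℝ) ^ 3 * (η₂ : ℝ) := by positivity
    linarith
  rw [sub_le_iff_le_add, ← sub_le_iff_le_add']
  have hDgeP : (2.6 : ℝ) ^ n * (η₂ : ℝ) ≤ (η₁ : ℝ) + 2 * (n : ℝ) ^ 3 * (η₂ : ℝ) := by
    have h0 : (0 : ℝ) ≤ 2 * (n : ℝ) ^ 3 * (η₂ : ℝ) := by positivity
    linarith
  have heq : 1 - (η₁ : ℝ) / ((η₁ : ℝ) + 2 * (n : ℝ) ^ 3 * (η₂ : ℝ))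
      = (2 * (n : ℝ) ^ 3 * (η₂ : ℝ)) / ((η₁ : ℝ) + 2 * (n : ℝ) ^ 3 * (η₂ : ℝ)) := by
    field_simp
    ring
  rw [heq, div_le_div_iff₀ hD hP]
  calc 2 * (n : ℝ) ^ 3 * (η₂ : ℝ) * 2.6 ^ n
      = (2 * (n : ℝ) ^ 3) * ((2.6 : ℝ) ^ n * (η₂ : ℝ)) := by ring
    _ ≤ (2 * (n : ℝ) ^ 3) * ((η₁ : ℝ) + 2 * (n : ℝ) ^ 3 * (η₂ : ℝ)) :=
        mul_le_mul_of_nonneg_left hDgeP hB
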